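/- The formula with reversal φ₁ = x y₁ x · ȳ₁ is 3-unavoidable: there are only finitely many finite words over a 3-letter alphabet that avoid φ₁. -/

import Mathlib

/-- A word `w` *encounters* the formula with reversal
`φ_k = x y₁ ⋯ y_k x · ȳ₁ · ⋯ · ȳ_k` if there are nonempty words `X, Y₁, …, Y_k`
such that `X Y₁ ⋯ Y_k X` is a factor of `w` and each reversed `Yᵢ` is a factor of `w`. -/
def Encounters {A : Type*} (k : ℕ) (w : List A) : Prop :=
  ∃ (X : List A) (Ys : List (List A)),
    Ys.length = k ∧ X ≠ [] ∧ (∀ Y ∈ Ys, Y ≠ []) ∧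
    (X ++ Ys.flatten ++ X) <:+: w ∧ (∀ Y ∈ Ys, Y.reverse <:+: w)

/-- A word avoids the formula with reversal `φ_k`. -/
def Avoids {A : Type*} (k : ℕ) (w : List A) : Prop := ¬ Encounters k w

/-- A word is square-free if it has no factor `u ++ u` with `u` nonempty. -/
def SquareFree {A : Type*} (w : List A) : Prop :=
  ∀ u : List A, u ≠ [] → ¬ (u ++ u) <:+: w

/-- Auxiliary function building the `m`-cyclic `w`-word starting at block index `i`. -/
def cyclicWordFrom {A : Type*} (m : ℕ) (a : ℕ → A) : ℕ → List ℕ → List A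
  | _, [] => []
  | i, x :: xs => List.replicate x (a (i % m)) ++ cyclicWordFrom m a (i + 1) xs

/-- The `m`-cyclic `w`-word `C_m(w)` on letters `a 0, …, a (m-1)`:
`(a 0)^{w₁} (a 1)^{w₂} ⋯ (a (m-1))^{w_m} (a 0)^{w_{m+1}} ⋯`. -/
def cyclicWord {A : Type*} (m : ℕ) (a : ℕ → A) (w : List ℕ) : List A :=
  cyclicWordFrom m a 0 w

/-- `w` (a word over `{1,…,k+1}`) contains a forbidden `(k,m)`-factor:
a factor `x' α₁ ⋯ α_j x''` with `1 ≤ j ≤ k`, each `αᵢ` a letter of `{1,…,k+1}`,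
`α₁+⋯+α_j ≥ k`, `|x'| = |x''| = n ≡ m - j (mod m)`, `x'₁ ≥ x''₁`, `x'ₙ ≤ x''ₙ`, and
`x'ᵢ = x''ᵢ` for `i ∈ {2,…,n-1}` (1-indexed). -/
def ForbiddenFactor (k m : ℕ) (w : List ℕ) : Prop :=
  ∃ x' α x'' : List ℕ,
    (x' ++ α ++ x'') <:+: w ∧
    1 ≤ α.length ∧ α.length ≤ k ∧
    (∀ c ∈ α, 1 ≤ c ∧ c ≤ k + 1) ∧
    k ≤ α.sum ∧
    x'.length = x''.length ∧
    x'.length % m = (m - α.length) % m ∧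
    x''.getD 0 0 ≤ x'.getD 0 0 ∧
    x'.getD (x'.length - 1) 0 ≤ x''.getD (x''.length - 1) 0 ∧
    ∀ i, 0 < i → i < x'.length - 1 → x'.getD i 0 = x''.getD i 0

/-- The 8-uniform morphism `f` with `f(0)=11112122`, `f(1)=12112222`, `f(2)=21111222`. -/
def fMorph (v : List ℕ) : List ℕ :=
  v.flatMap fun c =>
    if c = 0 then [1,1,1,1,2,1,2,2]
    else if c = 1 then [1,2,1,1,2,2,2,2]
    else [2,1,1,1,1,2,2,2]

/-- Image of a letter under the morphism `ρ` with `ρ(1)=22`, `ρ(2)=21`. -/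
def rhoLetter (c : ℕ) : List ℕ := if c = 1 then [2,2] else [2,1]

/-- The morphism `ρ : {1,2}* → {1,2}*` with `ρ(1)=22`, `ρ(2)=21`. -/
def rhoWord (v : List ℕ) : List ℕ := v.flatMap rhoLetter

/-- The morphism `d_k` with `d_k(i) = i^{k+1}` for `i ∈ {0,1,2}`. -/
def dMorph (k : ℕ) (w : List ℕ) : List ℕ := w.flatMap fun i => List.replicate (k + 1) i

/-- The morphism `g` with `g(i) = i·a·b`, where the letters `a, b` are coded `3, 4`. -/
def gMorph (w : List ℕ) : List ℕ := w.flatMap fun i => [i, 3, 4]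

/-- The morphism `g'` with `g'(i) = i·a·b·c·d`, where `a,b,c,d` are coded `3,4,5,6`. -/
def g'Morph (w : List ℕ) : List ℕ := w.flatMap fun i => [i, 3, 4, 5, 6]

/-- Insert the letter `c` after every `t` letters of `l`. -/
def insertEvery {A : Type*} (c : A) (t : ℕ) (l : List A) : List A :=
  if _h : l.length ≤ t ∨ t = 0 then l
  else l.take t ++ c :: insertEvery c t (l.drop t)
termination_by l.length
decreasing_by
  simp only [List.length_drop]
  omega

/-- `φ_k` is `n`-avoidable: infinitely many finite words over an `n`-letter alphabet avoid it. -/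
def IsNAvoidable (k n : ℕ) : Prop := {w : List (Fin n) | Avoids k w}.Infinite


-- aux
def facts (w : List (Fin 3)) : List (List (Fin 3)) := w.tails.flatMap (·.inits)

def encB (w : List (Fin 3)) : Bool :=
  w.tails.any fun f =>
    (List.range f.length).any fun p =>
      decide (1 ≤ p) && decide (2*p < f.length) &&
      (f.take p == f.drop (f.length - p)) &&
      (facts w).contains ((f.drop p).take (f.length - 2*p)).reverse

lemma mem_facts {f w : List (Fin 3)} (h : f ∈ facts w) : f <:+: w := by
  simp only [facts, List.mem_flatMap, List.mem_tails, List.mem_inits] at h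
  obtain ⟨t, ht, hf⟩ := h
  exact hf.isInfix.trans ht.isInfix

lemma enc_mono {v w : List (Fin 3)} (h : v <:+: w) (he : Encounters 1 v) :
    Encounters 1 w := by
  obtain ⟨X, Ys, h1, h2, h3, h4, h5⟩ := he
  exact ⟨X, Ys, h1, h2, h3, h4.trans h, fun Y hY => (h5 Y hY).trans h⟩

lemma encB_sound {w : List (Fin 3)} (h : encB w = true) : Encounters 1 w := by
  simp only [encB, List.any_eq_true, Bool.and_eq_true, decide_eq_true_eq,
    beq_iff_eq, List.contains_eq_any_beq, List.mem_range, List.mem_tails] at h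
  obtain ⟨f, hf, p, hplt, ⟨⟨hp1, hp2⟩, heq⟩, hY⟩ := h
  obtain ⟨g, hg, hgY⟩ := hY
  set X := f.take p with hX
  set Y := (f.drop p).take (f.length - 2*p) with hYdef
  have hfi : f <:+: w := hf.isInfix
  have hXlen : X.length = p := by
    simp [hX, List.length_take]; omega
  have hYlen : Y.length = f.length - 2*p := by
    simp [hYdef, List.length_take, List.length_drop]; omega
  have hsplit : f = X ++ Y ++ X := by
    have h1 : f = f.take p ++ f.drop p := (List.take_append_drop p f).symm
    have h2 : f.drop p = Y ++ (f.drop p).drop (f.length - 2*p) := by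
      rw [hYdef]; exact (List.take_append_drop _ _).symm
    have h3 : (f.drop p).drop (f.length - 2*p) = f.drop (f.length - p) := by
      rw [List.drop_drop]; congr 1; omega
    rw [h1, h2, h3, ← heq, hX, List.append_assoc]
  refine ⟨X, [Y], rfl, ?_, ?_, ?_, ?_⟩
  · intro hXe; rw [hXe] at hXlen; simp at hXlen; omega
  · intro Z hZ; simp at hZ; subst hZ
    intro hYe; rw [hYe] at hYlen; simp at hYlen; omega
  · simpa [← hsplit] using hfi
  · intro Z hZ; simp at hZ; subst hZ
    rw [hgY]; exact mem_facts hg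

def avoidingOfLen : ℕ → List (List (Fin 3))
  | 0 => [[]]
  | n+1 => (avoidingOfLen n).flatMap fun w =>
      ([0, 1, 2] : List (Fin 3)).filterMap fun c =>
        if encB (w ++ [c]) then none else some (w ++ [c])

lemma mem_avoidingOfLen : ∀ (w : List (Fin 3)), Avoids 1 w →
    w ∈ avoidingOfLen w.length := by
  intro w
  induction w using List.reverseRecOn with
  | nil => intro _; simp [avoidingOfLen]
  | append_singleton v c ih =>
    intro hav
    have hvav : Avoids 1 v := fun he => hav (enc_mono (v.prefix_append [c]).isInfix he)
    have hle : v ∈ avoidingOfLen v.length := ih hvav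
    have hcB : encB (v ++ [c]) = false := by
      by_contra hcB
      exact hav (encB_sound (by simpa using hcB))
    have hlen : (v ++ [c]).length = v.length + 1 := by simp
    rw [hlen, avoidingOfLen]
    simp only [List.mem_flatMap, List.mem_filterMap]
    exact ⟨v, hle, c, by fin_cases c <;> simp, by rw [hcB]; rfl⟩

set_option maxRecDepth 100000 in
set_option maxHeartbeats 4000000 in
lemma avoid15_empty : avoidingOfLen 15 = [] := by decide


/-- `φ₁` is 3-unavoidable: only finitely many words over a 3-letter
alphabet avoid `φ₁`. -/
theorem phi_one_three_unavoidable : {w : List (Fin 3) | Avoids 1 w}.Finite := by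
  apply Set.Finite.subset (List.finite_length_le (Fin 3) 14)
  intro w hw
  simp only [Set.mem_setOf_eq] at *
  by_contra hlen
  push_neg at hlen
  have htk : (w.take 15).length = 15 := by simp; omega
  have hvav : Avoids 1 (w.take 15) := fun he => hw (enc_mono (w.take_prefix 15).isInfix he)
  have := mem_avoidingOfLen _ hvav
  rw [htk, avoid15_empty] at this
  exact (List.not_mem_nil this)
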